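/- arXiv:1104.2340 — 4 statements merged into one kernel-verified Lean document; each statement's English description precedes it below -/
import Mathlib

section
/- Let (X_n) be a nonnegative stochastic process adapted to a filtration (F_n) with X_0 = 0, satisfying E[X_{n+1} | F_n] ≤ X_n + B_n, where the B_n are nonnegative random variables with finite means (not necessarily adapted). Let X_T* = max{X_0, ..., X_T}. Then for any a > 0 and any T ∈ ℤ_+, P(X_T* ≥ a) ≤ (Σ_{n=0}^{T-1} E[B_n]) / a. -/
open MeasureTheory Finset

/-- Maximal inequality for a nonnegative adapted process with controlled drift:
if `X 0 = 0` and `E[X (n+1) | F n] ≤ X n + B n` with `B n` nonnegative integrable,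
then `P(max_{0 ≤ n ≤ T} X n ≥ a) ≤ (∑_{n<T} E[B n]) / a`. -/
theorem maximal_inequality_drift
    {Ω : Type*} {m0 : MeasurableSpace Ω} {μ : Measure Ω} [IsProbabilityMeasure μ]
    (F : Filtration ℕ m0) (X B : ℕ → Ω → ℝ)
    (hadapted : StronglyAdapted F X)
    (hXint : ∀ n, Integrable (X n) μ)
    (hXnonneg : ∀ n, 0 ≤ᵐ[μ] X n)
    (hX0 : X 0 =ᵐ[μ] 0)
    (hBnonneg : ∀ n, 0 ≤ᵐ[μ] B n)
    (hBint : ∀ n, Integrable (B n) μ)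
    (hdrift : ∀ n, ∀ᵐ ω ∂μ, (μ[X (n + 1) | F n]) ω ≤ X n ω + B n ω)
    (a : ℝ) (ha : 0 < a) (T : ℕ) :
    μ {ω | a ≤ (Finset.range (T + 1)).sup' Finset.nonempty_range_add_one (fun n => X n ω)}
      ≤ ENNReal.ofReal ((∑ n ∈ Finset.range T, ∫ ω, B n ω ∂μ) / a) := by
  classical
  set Y : ℕ → Ω → ℝ :=
    fun n ω => X (min n T) ω + ∑ k ∈ Finset.Ico n T, (μ[B k | F n]) ω with hYdef
  have hYint : ∀ n, Integrable (Y n) μ := fun n =>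
    (hXint _).add (integrable_finset_sum _ fun k _ => integrable_condExp)
  have hYadp : StronglyAdapted F Y := fun n =>
    ((hadapted (min n T)).mono (F.mono (min_le_left n T))).add
      (Finset.stronglyMeasurable_fun_sum _ fun k _ => stronglyMeasurable_condExp)
  -- supermartingale property
  have hsuper : Supermartingale Y F μ := by
    refine supermartingale_nat hYadp hYint fun n => ?_
    by_cases hn : n < T
    · have hmin1 : min (n + 1) T = n + 1 := min_eq_left hn
      have hmin0 : min n T = n := min_eq_left hn.le
      have hsplit : (μ[Y (n + 1) | F n]) =ᵐ[μ]
          (μ[X (n + 1) | F n]) + ∑ k ∈ Finset.Ico (n + 1) T, (μ[B k | F n]) := by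
        have h1 : Y (n + 1) = X (n + 1) + ∑ k ∈ Finset.Ico (n + 1) T,
            (μ[B k | F (n + 1)]) := by
          funext ω; simp [hYdef, hmin1]
        rw [h1]
        refine (condExp_add (hXint (n + 1))
          (integrable_finset_sum' _ fun k _ => integrable_condExp) (F n)).trans ?_
        refine Filter.EventuallyEq.add Filter.EventuallyEq.rfl ?_
        refine (condExp_finset_sum (fun k _ => integrable_condExp) (F n)).trans ?_
        exact eventuallyEq_sum fun k _ =>
          condExp_condExp_of_le (F.mono n.le_succ) (F.le (n + 1))
      have hdrift' : (μ[X (n + 1) | F n]) ≤ᵐ[μ] X n + (μ[B n | F n]) := by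
        have h1 := condExp_mono (m := F n) integrable_condExp ((hXint n).add (hBint n))
          (hdrift n)
        have h2 : (μ[(μ[X (n + 1) | F n]) | F n]) = (μ[X (n + 1) | F n]) :=
          condExp_of_stronglyMeasurable (F.le n) stronglyMeasurable_condExp integrable_condExp
        have h3 : (μ[X n + B n | F n]) =ᵐ[μ] X n + (μ[B n | F n]) := by
          refine (condExp_add (hXint n) (hBint n) (F n)).trans ?_
          refine Filter.EventuallyEq.add ?_ Filter.EventuallyEq.rfl
          rw [condExp_of_stronglyMeasurable (F.le n) (hadapted n) (hXint n)]
        rw [h2] at h1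
        exact h1.trans h3.le
      have hins : insert n (Finset.Ico (n + 1) T) = Finset.Ico n T :=
        Finset.insert_Ico_add_one_left_eq_Ico hn
      filter_upwards [hsplit, hdrift'] with ω h1 h2
      simp only [Pi.add_apply, Finset.sum_apply] at h1 h2
      rw [h1]
      have hYn : Y n ω = X n ω + ((μ[B n | F n]) ω + ∑ k ∈ Finset.Ico (n + 1) T,
          (μ[B k | F n]) ω) := by
        rw [hYdef]
        simp only [hmin0]
        rw [← hins, Finset.sum_insert (by simp [Finset.mem_Ico])]
      rw [hYn]
      linarith
    · push_neg at hn
      have h1 : Y (n + 1) = X T := by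
        funext ω
        rw [hYdef]
        simp [min_eq_right (hn.trans n.le_succ),
          Finset.Ico_eq_empty (show ¬ n + 1 < T by omega)]
      have h2 : Y n = X T := by
        funext ω
        rw [hYdef]
        simp [min_eq_right hn, Finset.Ico_eq_empty (show ¬ n < T by omega)]
      rw [h1, h2, condExp_of_stronglyMeasurable (F.le n) ((hadapted T).mono (F.mono hn))
        (hXint T)]
  -- a.e. nonnegativity of all Y n
  have hYnonneg : ∀ᵐ ω ∂μ, ∀ n, 0 ≤ Y n ω := by
    rw [ae_all_iff]
    intro n
    have h2 : ∀ᵐ ω ∂μ, ∀ k, 0 ≤ (μ[B k | F n]) ω := by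
      rw [ae_all_iff]; exact fun k => condExp_nonneg (hBnonneg k)
    filter_upwards [hXnonneg (min n T), h2] with ω hX hB
    exact add_nonneg hX (Finset.sum_nonneg fun k _ => hB k)
  -- the maximal sets
  set S : Set Ω :=
    {ω | a ≤ (Finset.range (T + 1)).sup' Finset.nonempty_range_add_one fun n => Y n ω} with hSdef
  have hYmeas : ∀ n, Measurable (Y n) := fun n =>
    ((hYadp n).mono (F.le n)).measurable
  have hSmeas : MeasurableSet S :=
    measurableSet_le measurable_const
      (Finset.measurable_range_sup'' fun n _ => hYmeas n)
  -- Step A : the X-set is a.e. contained in S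
  have hstepA :
      μ {ω | a ≤ (Finset.range (T + 1)).sup' Finset.nonempty_range_add_one fun n => X n ω} ≤ μ S := by
    refine measure_mono_ae ?_
    have h2 : ∀ᵐ ω ∂μ, ∀ k, ∀ n, 0 ≤ (μ[B k | F n]) ω := by
      rw [ae_all_iff]; intro k; rw [ae_all_iff]
      exact fun n => condExp_nonneg (hBnonneg k)
    filter_upwards [h2] with ω hB hmem
    refine le_trans hmem (Finset.sup'_mono_fun fun n hn => ?_)
    have hnT : min n T = n := min_eq_left (by
      simpa [Nat.lt_succ_iff] using Finset.mem_range.1 hn)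
    rw [hYdef]
    simp only [hnT]
    exact le_add_of_nonneg_right (Finset.sum_nonneg fun k _ => hB k n)
  -- hitting time
  set τ : Ω → WithTop ℕ := fun ω => (hittingBtwn Y (Set.Ici a) 0 T ω : ℕ) with hτdef
  have hτstop : IsStoppingTime F τ := hittingBtwn_isStoppingTime hYadp.adapted measurableSet_Ici
  set sv : Ω → ℝ := stoppedValue Y τ with hsvdef
  have hsvInt : Integrable sv μ :=
    integrable_stoppedValue ℕ hτstop hYint fun ω => WithTop.coe_le_coe.2 (hittingBtwn_le ω)
  -- Step C : a * μ S ≤ ∫_S sv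
  have hstepC : a * (μ S).toReal ≤ ∫ ω in S, sv ω ∂μ := by
    rw [mul_comm]
    refine setIntegral_ge_of_const_le hSmeas (measure_ne_top _ _) ?_ hsvInt.integrableOn
    intro ω hω
    rw [hSdef, Set.mem_setOf_eq] at hω
    rw [Finset.le_sup'_iff] at hω
    obtain ⟨j, hj, hja⟩ := hω
    have : stoppedValue Y τ ω ∈ Set.Ici a := by
      refine stoppedValue_hittingBtwn_mem ?_
      exact ⟨j, ⟨Nat.zero_le _, Nat.lt_succ_iff.1 (Finset.mem_range.1 hj)⟩, hja⟩
    exact this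
  -- Step D : ∫_S sv ≤ ∫ sv
  have hstepD : ∫ ω in S, sv ω ∂μ ≤ ∫ ω, sv ω ∂μ := by
    refine setIntegral_le_integral hsvInt ?_
    filter_upwards [hYnonneg] with ω hY
    exact hY _
  -- Step E : ∫ sv ≤ ∫ Y 0 (optional stopping for the supermartingale)
  have hstepE : ∫ ω, sv ω ∂μ ≤ ∫ ω, Y 0 ω ∂μ := by
    have h := hsuper.neg.expected_stoppedValue_mono (isStoppingTime_const F 0) hτstop
      (fun ω => WithTop.coe_le_coe.2 (Nat.zero_le _))
      (fun ω => WithTop.coe_le_coe.2 (hittingBtwn_le ω))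
    rw [stoppedValue_const] at h
    have h2 : stoppedValue (-Y) τ = fun ω => - sv ω := rfl
    have h3 : (-Y) 0 = fun ω => - Y 0 ω := rfl
    rw [h2, h3] at h
    simp only [integral_neg] at h
    linarith
  -- Step F : ∫ Y 0 = ∑_{k<T} ∫ B k
  have hstepF : ∫ ω, Y 0 ω ∂μ = ∑ n ∈ Finset.range T, ∫ ω, B n ω ∂μ := by
    have h0 : ∀ ω, Y 0 ω = X 0 ω + ∑ k ∈ Finset.Ico 0 T, (μ[B k | F 0]) ω := fun ω => by
      simp [hYdef]
    have h1 : ∫ ω, Y 0 ω ∂μ = (∫ ω, X 0 ω ∂μ) +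
        ∑ k ∈ Finset.Ico 0 T, ∫ ω, (μ[B k | F 0]) ω ∂μ := by
      simp_rw [h0]
      rw [integral_add (hXint 0) (integrable_finset_sum _ fun k _ => integrable_condExp),
        integral_finset_sum _ fun k _ => integrable_condExp]
    rw [h1, integral_congr_ae hX0]
    simp only [Pi.zero_apply, integral_zero, zero_add]
    rw [← Finset.range_eq_Ico]
    exact Finset.sum_congr rfl fun k _ => integral_condExp (F.le 0)
  -- conclude
  refine hstepA.trans ?_
  have hkey : a * (μ S).toReal ≤ ∑ n ∈ Finset.range T, ∫ ω, B n ω ∂μ := by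
    rw [← hstepF]
    exact hstepC.trans (hstepD.trans hstepE)
  have h5 : (μ S).toReal ≤ (∑ n ∈ Finset.range T, ∫ ω, B n ω ∂μ) / a :=
    (le_div_iff₀ ha).2 (by linarith)
  calc μ S = ENNReal.ofReal (μ S).toReal := (ENNReal.ofReal_toReal (measure_ne_top _ _)).symm
    _ ≤ ENNReal.ofReal ((∑ n ∈ Finset.range T, ∫ ω, B n ω ∂μ) / a) :=
        ENNReal.ofReal_le_ofReal h5
end

section
/- Let G : ℝ_p^d → ℝ be strictly concave and differentiable on the open positive orthant, let K ⊆ ℝ_+^d be a compact convex set, and let Λ* ∈ K ∩ ℝ_p^d be the maximizer of G over K ∩ ℝ_p^d. Suppose v ∈ K ∩ ℝ_p^d and ε > 0 satisfy (1+ε)v ∈ K. If additionally ∇G((1+ε)v) = (1+ε)^{−α} ∇G(v) for some α > 0, then ⟨∇G(v), v − Λ*⟩ ≤ −ε ⟨∇G(v), v⟩. -/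
open Filter Topology

/-- First-order condition: if `G` is concave on convex `P`, `w, y ∈ P`, `G y ≥ G w`,
and `G` is differentiable at `w`, then `fderiv G w (y - w) ≥ 0`. -/
lemma concave_foc {d : ℕ} (G : (Fin d → ℝ) → ℝ) (P : Set (Fin d → ℝ))
    (hconc : ConcaveOn ℝ P G) (w y : Fin d → ℝ) (hw : w ∈ P) (hy : y ∈ P)
    (hGy : G w ≤ G y) (hd : DifferentiableAt ℝ G w) :
    0 ≤ fderiv ℝ G w (y - w) := by
  set u : Fin d → ℝ := y - w with hu
  set φ : ℝ → ℝ := fun t => G (w + t • u) with hφ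
  have hline : ∀ t : ℝ, HasDerivAt (fun t : ℝ => w + t • u) u t := by
    intro t
    simpa using ((hasDerivAt_id t).smul_const u).const_add w
  have hderiv : HasDerivAt φ (fderiv ℝ G w u) 0 := by
    have h0 : HasFDerivAt G (fderiv ℝ G w) (w + (0:ℝ) • u) := by
      simpa using hd.hasFDerivAt
    exact (h0.comp_hasDerivAt 0 (hline 0))
  -- φ t ≥ φ 0 for t ∈ (0,1]
  have hkey : ∀ t : ℝ, 0 < t → t ≤ 1 → φ 0 ≤ φ t := by
    intro t ht ht1
    have hmem : w + t • u = (1 - t) • w + t • y := by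
      rw [hu]; module
    have := hconc.2 hw hy (by linarith : (0:ℝ) ≤ 1 - t) (le_of_lt ht) (by ring)
    simp only [hφ, zero_smul, add_zero, hmem]
    calc G w = (1 - t) * G w + t * G w := by ring
      _ ≤ (1 - t) * G w + t * G y := by nlinarith
      _ ≤ G ((1 - t) • w + t • y) := this
  -- slope ≥ 0 near 0 from the right
  have hslope : Tendsto (slope φ 0) (𝓝[>] (0:ℝ)) (𝓝 (fderiv ℝ G w u)) :=
    (hasDerivAt_iff_tendsto_slope.mp hderiv).mono_left
      (nhdsWithin_mono 0 (fun x hx => ne_of_gt hx))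
  have hnn : ∀ᶠ t in 𝓝[>] (0:ℝ), 0 ≤ slope φ 0 t := by
    filter_upwards [Ioo_mem_nhdsGT_of_mem (by norm_num : (0:ℝ) ∈ Set.Ico 0 1)]
      with t ht
    have h1 := hkey t ht.1 (le_of_lt ht.2)
    have : 0 ≤ φ t - φ 0 := by linarith
    rw [slope_def_field]
    apply div_nonneg (by linarith) (by linarith [ht.1])
  exact ge_of_tendsto hslope hnn

/-- Abstract core of the drift inequality for α-fair allocations: if `G` is strictly
concave and differentiable on the open positive orthant, `Λ*` maximizes `G` over the
positive part of a compact convex set `K ⊆ ℝ_+^d`, `v ∈ K` is positive with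
`(1+ε)v ∈ K`, and `∇G((1+ε)v) = (1+ε)^{−α} ∇G(v)`, then
`⟨∇G(v), v − Λ*⟩ ≤ −ε ⟨∇G(v), v⟩`. -/
theorem alpha_fair_drift_core {d : ℕ}
    (G : (Fin d → ℝ) → ℝ)
    (P : Set (Fin d → ℝ)) (hP : P = {x | ∀ i, 0 < x i})
    (hconc : StrictConcaveOn ℝ P G)
    (hdiff : ∀ z ∈ P, DifferentiableAt ℝ G z)
    (K : Set (Fin d → ℝ)) (hKcompact : IsCompact K) (hKconv : Convex ℝ K)
    (hKnonneg : ∀ x ∈ K, ∀ i, 0 ≤ x i)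
    (Λstar : Fin d → ℝ) (hΛK : Λstar ∈ K ∩ P)
    (hmax : ∀ z ∈ K ∩ P, G z ≤ G Λstar)
    (v : Fin d → ℝ) (hv : v ∈ K ∩ P)
    (ε : ℝ) (hε : 0 < ε) (hεv : (1 + ε) • v ∈ K)
    (α : ℝ) (hα : 0 < α)
    (hhom : fderiv ℝ G ((1 + ε) • v) = ((1 + ε) ^ (-α)) • fderiv ℝ G v) :
    fderiv ℝ G v (v - Λstar) ≤ -ε * fderiv ℝ G v v := by
  set w : Fin d → ℝ := (1 + ε) • v with hw
  have h1ε : (0:ℝ) < 1 + ε := by linarith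
  have hvP : v ∈ P := hv.2
  have hwP : w ∈ P := by
    rw [hP] at hvP ⊢
    intro i
    have := hvP i
    simp only [hw, Pi.smul_apply, smul_eq_mul]
    positivity
  have hGw : G w ≤ G Λstar := hmax w ⟨hεv, hwP⟩
  have hfoc : 0 ≤ fderiv ℝ G w (Λstar - w) :=
    concave_foc G P hconc.concaveOn w Λstar hwP hΛK.2 hGw (hdiff w hwP)
  rw [hhom] at hfoc
  have hc : (0:ℝ) < (1 + ε) ^ (-α) := Real.rpow_pos_of_pos h1ε _
  have hfoc2 : 0 ≤ fderiv ℝ G v (Λstar - w) := by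
    have : (0:ℝ) ≤ (1 + ε) ^ (-α) * fderiv ℝ G v (Λstar - w) := by
      simpa using hfoc
    nlinarith
  have hmap := (fderiv ℝ G v).map_sub Λstar w
  have hmapw : fderiv ℝ G v w = (1 + ε) * fderiv ℝ G v v := by
    rw [hw, map_smul]; simp
  have hgoal := (fderiv ℝ G v).map_sub v Λstar
  rw [hmap, hmapw] at hfoc2
  rw [hgoal]
  linarith
end

section
/- Let (X_n) be an irreducible aperiodic discrete-time Markov chain on a countable state space with stationary distribution π, and let Φ be a nonnegative function on the state space such that: (a) |Φ(X_{n+1}) − Φ(X_n)| ≤ ξ almost surely for some ξ > 0, and (b) there exist B > 0 and γ > 0 with E[Φ(X_{n+1}) − Φ(X_n) | X_n] ≤ −γ whenever Φ(X_n) > B. Then for every ℓ ∈ ℤ_+, π({x : Φ(x) > B + 2ξℓ}) ≤ (ξ/(ξ+γ))^{ℓ+1}. -/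
/-- Exponential tail bound for the stationary distribution of an irreducible
aperiodic countable-state Markov chain with a Lyapunov function having bounded
increments and negative drift (Bertsimas–Gamarnik–Tsitsiklis / Hajek). -/
theorem stationary_exponential_tail_bound
    {S : Type*} [Countable S] [DecidableEq S]
    (P : S → S → ℝ) (π : S → ℝ) (Φ : S → ℝ)
    (ξ B γ : ℝ) (hξ : 0 < ξ) (hB : 0 < B) (hγ : 0 < γ)
    (hPnonneg : ∀ x y, 0 ≤ P x y) (hProw : ∀ x, ∑' y, P x y = 1)
    (hπnonneg : ∀ x, 0 ≤ π x) (hπsum : ∑' x, π x = 1)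
    (hstationary : ∀ y, ∑' x, π x * P x y = π y)
    -- n-step transition probabilities
    (Pn : ℕ → S → S → ℝ)
    (hPn0 : ∀ x y, Pn 0 x y = if x = y then 1 else 0)
    (hPnsucc : ∀ m x y, Pn (m + 1) x y = ∑' z, Pn m x z * P z y)
    -- irreducibility and aperiodicity
    (hirred : ∀ x y, ∃ m, 0 < Pn m x y)
    (haper : ∀ x, ∃ N, ∀ m ≥ N, 0 < Pn m x x)
    -- Lyapunov function: nonnegative, bounded increments, negative drift
    (hΦnonneg : ∀ x, 0 ≤ Φ x)
    (hbdd : ∀ x y, 0 < P x y → |Φ y - Φ x| ≤ ξ)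
    (hdrift : ∀ x, B < Φ x → ∑' y, P x y * (Φ y - Φ x) ≤ -γ) :
    ∀ ℓ : ℕ, (∑' x : {x : S // B + 2 * ξ * ℓ < Φ x}, π x) ≤ (ξ / (ξ + γ)) ^ (ℓ + 1) := by
  classical
  intro ℓ
  -- basic summability facts
  have hπs : Summable π := by
    by_contra h
    rw [tsum_eq_zero_of_not_summable h] at hπsum
    exact one_ne_zero hπsum.symm
  have hPs : ∀ x, Summable (P x) := by
    intro x
    by_contra h
    have := hProw x
    rw [tsum_eq_zero_of_not_summable h] at this
    exact one_ne_zero this.symm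
  have hπPs : ∀ y, Summable fun x => π x * P x y := by
    intro y
    refine Summable.of_nonneg_of_le (fun x => mul_nonneg (hπnonneg x) (hPnonneg x y))
      (fun x => ?_) hπs
    have hle1 : P x y ≤ 1 := by
      have h := Summable.le_tsum (hPs x) y (fun j _ => hPnonneg x j)
      rw [hProw x] at h
      exact h
    nlinarith [hπnonneg x]
  -- the tail-mass function
  set T : ℝ → ℝ := fun t => ∑' x, if t < Φ x then π x else 0 with hTdef
  have hTs : ∀ t : ℝ, Summable fun x => if t < Φ x then π x else 0 := by
    intro t
    refine Summable.of_nonneg_of_le (fun x => ?_) (fun x => ?_) hπs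
    · split <;> simp [hπnonneg x]
    · split <;> simp [hπnonneg x]
  have hT0 : ∀ t, 0 ≤ T t := by
    intro t
    exact tsum_nonneg fun x => by split <;> simp [hπnonneg x]
  have hT1 : ∀ t, T t ≤ 1 := by
    intro t
    rw [← hπsum]
    exact Summable.tsum_le_tsum (fun x => by split <;> simp [hπnonneg x]) (hTs t) hπs
  have hTdiff : ∀ t s : ℝ, t ≤ s →
      (∑' x, if t < Φ x ∧ Φ x ≤ s then π x else 0) = T t - T s := by
    intro t s hts
    have hfun : (fun x => if t < Φ x ∧ Φ x ≤ s then π x else 0)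
        = fun x => (if t < Φ x then π x else 0) - (if s < Φ x then π x else 0) := by
      funext x
      by_cases h1 : t < Φ x
      · by_cases h2 : s < Φ x
        · simp [h1, h2, not_le.mpr h2]
        · simp [h1, h2, not_lt.mp h2]
      · have h2 : ¬ s < Φ x := fun hc => h1 (lt_of_le_of_lt hts hc)
        simp [h1, h2]
    rw [hfun, Summable.tsum_sub (hTs t) (hTs s)]
  -- the key one-step estimate with truncation M
  have keyM : ∀ a : ℝ, B ≤ a → ∀ M : ℝ, 0 < M →
      γ * (T a - T (a + M)) ≤ ξ * (T (a - ξ) - T a) := by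
    intro a ha M hM
    -- the truncated test function and auxiliary weights
    set g : S → ℝ := fun x => min (max (Φ x - a) 0) M with hgdef
    set dd : S → ℝ := fun x => min (max (a - Φ x) 0) ξ with hddef
    have hg0 : ∀ x, 0 ≤ g x := fun x => le_min (le_max_right _ _) hM.le
    have hgM : ∀ x, g x ≤ M := fun x => min_le_right _ _
    have hd0 : ∀ x, 0 ≤ dd x := fun x => le_min (le_max_right _ _) hξ.le
    have hdξ : ∀ x, dd x ≤ ξ := fun x => min_le_right _ _
    have hsPg : ∀ x, Summable fun y => P x y * g y := by
      intro x
      refine Summable.of_nonneg_of_le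
        (fun y => mul_nonneg (hPnonneg x y) (hg0 y))
        (fun y => mul_le_mul_of_nonneg_left (hgM y) (hPnonneg x y))
        ((hPs x).mul_right M)
    have hsPd : ∀ x, Summable fun y => P x y * dd y := by
      intro x
      refine Summable.of_nonneg_of_le
        (fun y => mul_nonneg (hPnonneg x y) (hd0 y))
        (fun y => mul_le_mul_of_nonneg_left (hdξ y) (hPnonneg x y))
        ((hPs x).mul_right ξ)
    set F : S → ℝ := fun x => ∑' y, P x y * g y with hFdef
    set w : S → ℝ := fun x => ∑' y, P x y * dd y with hwdef
    have hF0 : ∀ x, 0 ≤ F x :=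
      fun x => tsum_nonneg fun y => mul_nonneg (hPnonneg x y) (hg0 y)
    have hFM : ∀ x, F x ≤ M := by
      intro x
      calc F x ≤ ∑' y, P x y * M :=
            Summable.tsum_le_tsum (fun y => mul_le_mul_of_nonneg_left (hgM y) (hPnonneg x y))
              (hsPg x) ((hPs x).mul_right M)
        _ = M := by rw [tsum_mul_right, hProw, one_mul]
    have hw0 : ∀ x, 0 ≤ w x :=
      fun x => tsum_nonneg fun y => mul_nonneg (hPnonneg x y) (hd0 y)
    have hwξ : ∀ x, w x ≤ ξ := by
      intro x
      calc w x ≤ ∑' y, P x y * ξ :=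
            Summable.tsum_le_tsum (fun y => mul_le_mul_of_nonneg_left (hdξ y) (hPnonneg x y))
              (hsPd x) ((hPs x).mul_right ξ)
        _ = ξ := by rw [tsum_mul_right, hProw, one_mul]
    have hπF : Summable fun x => π x * F x := by
      refine Summable.of_nonneg_of_le
        (fun x => mul_nonneg (hπnonneg x) (hF0 x))
        (fun x => mul_le_mul_of_nonneg_left (hFM x) (hπnonneg x))
        (hπs.mul_right M)
    have hπg : Summable fun x => π x * g x := by
      refine Summable.of_nonneg_of_le
        (fun x => mul_nonneg (hπnonneg x) (hg0 x))
        (fun x => mul_le_mul_of_nonneg_left (hgM x) (hπnonneg x))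
        (hπs.mul_right M)
    -- Step A : stationarity applied to the bounded function g
    have stepA : ∑' x, π x * F x = ∑' x, π x * g x := by
      have hrow : ∀ x, Summable fun y => π x * (P x y * g y) :=
        fun x => (hsPg x).mul_left (π x)
      have hcol : Summable fun x => ∑' y, π x * (P x y * g y) :=
        hπF.congr fun x => (tsum_mul_left (a := π x)).symm
      have hunc : Summable (Function.uncurry fun x y => π x * (P x y * g y)) := by
        refine (summable_prod_of_nonneg ?_).2 ⟨fun x => hrow x, hcol⟩
        intro p
        exact mul_nonneg (hπnonneg p.1) (mul_nonneg (hPnonneg p.1 p.2) (hg0 p.2))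
      calc ∑' x, π x * F x = ∑' x, ∑' y, π x * (P x y * g y) :=
            tsum_congr fun x => (tsum_mul_left (a := π x)).symm
        _ = ∑' y, ∑' x, π x * (P x y * g y) := (Summable.tsum_comm hunc).symm
        _ = ∑' y, π y * g y := by
            refine tsum_congr fun y => ?_
            have h1 : (fun x => π x * (P x y * g y)) = fun x => (π x * P x y) * g y := by
              funext x; ring
            rw [h1, tsum_mul_right, hstationary y]
    -- pointwise estimates on F
    have hlow : ∀ x, Φ x ≤ a → F x ≤ max (ξ - (a - Φ x)) 0 := by
      intro x hx
      have hpt : ∀ y, P x y * g y ≤ P x y * max (ξ - (a - Φ x)) 0 := by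
        intro y
        rcases (hPnonneg x y).eq_or_lt with h | h
        · rw [← h]; simp
        · refine mul_le_mul_of_nonneg_left ?_ (hPnonneg x y)
          have hb := abs_le.1 (hbdd x y h)
          calc g y ≤ max (Φ y - a) 0 := min_le_left _ _
            _ ≤ max (ξ - (a - Φ x)) 0 := max_le_max (by linarith [hb.2]) le_rfl
      calc F x ≤ ∑' y, P x y * max (ξ - (a - Φ x)) 0 :=
            Summable.tsum_le_tsum hpt (hsPg x) ((hPs x).mul_right _)
        _ = max (ξ - (a - Φ x)) 0 := by rw [tsum_mul_right, hProw, one_mul]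
    have hhigh : ∀ x, a < Φ x → Φ x ≤ a + M → F x ≤ g x - γ + w x := by
      intro x h1 h2
      have hpt : ∀ y, P x y * g y
          ≤ P x y * (Φ y - Φ x) + (P x y * (Φ x - a) + P x y * dd y) := by
        intro y
        rcases (hPnonneg x y).eq_or_lt with h | h
        · rw [← h]; simp
        · have hb := abs_le.1 (hbdd x y h)
          have hddy : dd y = max (a - Φ y) 0 := by
            simp only [hddef]
            exact min_eq_left (max_le (by linarith [hb.1]) hξ.le)
          have hsplit : max (Φ y - a) 0 = (Φ y - a) + max (a - Φ y) 0 := by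
            rcases le_total (Φ y) a with h5 | h5
            · rw [max_eq_right (by linarith), max_eq_left (by linarith)]; ring
            · rw [max_eq_left (by linarith), max_eq_right (by linarith)]; ring
          have hgy : g y ≤ (Φ y - Φ x) + ((Φ x - a) + dd y) := by
            have := min_le_left (max (Φ y - a) 0) M
            simp only [hgdef]
            rw [hddy]
            calc min (max (Φ y - a) 0) M ≤ max (Φ y - a) 0 := min_le_left _ _
              _ = (Φ y - a) + max (a - Φ y) 0 := hsplit
              _ = (Φ y - Φ x) + ((Φ x - a) + max (a - Φ y) 0) := by ring
          calc P x y * g y ≤ P x y * ((Φ y - Φ x) + ((Φ x - a) + dd y)) :=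
                mul_le_mul_of_nonneg_left hgy (hPnonneg x y)
            _ = P x y * (Φ y - Φ x) + (P x y * (Φ x - a) + P x y * dd y) := by ring
      have hs1 : Summable fun y => P x y * (Φ y - Φ x) := by
        refine Summable.of_abs ?_
        refine Summable.of_nonneg_of_le (fun y => abs_nonneg _) (fun y => ?_)
          ((hPs x).mul_right ξ)
        rcases (hPnonneg x y).eq_or_lt with h | h
        · rw [← h]; simp [hξ.le]
        · rw [abs_mul, abs_of_pos h]
          exact mul_le_mul_of_nonneg_left (hbdd x y h) (hPnonneg x y)
      have hs2 : Summable fun y => P x y * (Φ x - a) := (hPs x).mul_right _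
      have hs3 : Summable fun y => P x y * dd y := hsPd x
      have hineq := Summable.tsum_le_tsum hpt (hsPg x) (hs1.add (hs2.add hs3))
      rw [Summable.tsum_add hs1 (hs2.add hs3), Summable.tsum_add hs2 hs3, tsum_mul_right, hProw, one_mul]
        at hineq
      have hdr := hdrift x (lt_of_le_of_lt ha h1)
      have hgx : g x = Φ x - a := by
        simp only [hgdef]
        rw [max_eq_left (by linarith), min_eq_left (by linarith)]
      rw [hgx]
      calc F x ≤ (∑' y, P x y * (Φ y - Φ x)) + ((Φ x - a) + w x) := hineq
        _ ≤ -γ + ((Φ x - a) + w x) := by linarith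
        _ = Φ x - a - γ + w x := by ring
    have hfar : ∀ x, a + M < Φ x → F x ≤ g x := by
      intro x hx
      have hgx : g x = M := by
        simp only [hgdef]
        rw [max_eq_left (by linarith), min_eq_right (by linarith)]
      rw [hgx]
      exact hFM x
    -- the four summable pieces
    set χ : S → ℝ := fun x => if a < Φ x then π x else 0 with hχdef
    have hχ0 : ∀ x, 0 ≤ χ x := by
      intro x; simp only [hχdef]; split <;> simp [hπnonneg x]
    have hχπ : ∀ x, χ x ≤ π x := by
      intro x; simp only [hχdef]; split <;> simp [hπnonneg x]
    set sA : S → ℝ := fun x => if Φ x ≤ a then π x * max (ξ - (a - Φ x)) 0 else 0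
      with hsAdef
    set sB : S → ℝ := fun x => if a < Φ x then π x * g x else 0 with hsBdef
    set sC : S → ℝ := fun x => if a < Φ x ∧ Φ x ≤ a + M then π x else 0 with hsCdef
    set sD : S → ℝ := fun x => χ x * w x with hsDdef
    have hsA0 : ∀ x, 0 ≤ sA x := by
      intro x; simp only [hsAdef]
      split
      · exact mul_nonneg (hπnonneg x) (le_max_right _ _)
      · exact le_rfl
    have hsAle : ∀ x, sA x ≤ π x * ξ := by
      intro x; simp only [hsAdef]
      split
      · exact mul_le_mul_of_nonneg_left (max_le (by linarith) hξ.le) (hπnonneg x)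
      · exact mul_nonneg (hπnonneg x) hξ.le
    have hsAs : Summable sA := Summable.of_nonneg_of_le hsA0 hsAle (hπs.mul_right ξ)
    have hsBs : Summable sB := by
      refine Summable.of_nonneg_of_le (fun x => ?_) (fun x => ?_) (hπs.mul_right M)
      · simp only [hsBdef]; split
        · exact mul_nonneg (hπnonneg x) (hg0 x)
        · exact le_rfl
      · simp only [hsBdef]; split
        · exact mul_le_mul_of_nonneg_left (hgM x) (hπnonneg x)
        · exact mul_nonneg (hπnonneg x) hM.le
    have hsCs : Summable sC := by
      refine Summable.of_nonneg_of_le (fun x => ?_) (fun x => ?_) hπs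
      · simp only [hsCdef]; split <;> simp [hπnonneg x]
      · simp only [hsCdef]; split <;> simp [hπnonneg x]
    have hsDs : Summable sD := by
      refine Summable.of_nonneg_of_le
        (fun x => mul_nonneg (hχ0 x) (hw0 x)) (fun x => ?_) (hπs.mul_right ξ)
      simp only [hsDdef]
      exact mul_le_mul (hχπ x) (hwξ x) (hw0 x) (hπnonneg x)
    -- the master inequality
    have master : ∑' x, π x * g x
        ≤ ∑' x, sA x + ∑' x, sB x - γ * ∑' x, sC x + ∑' x, sD x := by
      rw [← stepA]
      have hpt : ∀ x, π x * F x ≤ sA x + sB x - γ * sC x + sD x := by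
        intro x
        by_cases h1 : a < Φ x
        · have hA : sA x = 0 := by simp only [hsAdef]; exact if_neg (not_le.mpr h1)
          have hBx : sB x = π x * g x := by simp only [hsBdef]; exact if_pos h1
          have hχx : χ x = π x := by simp only [hχdef]; exact if_pos h1
          by_cases h2 : Φ x ≤ a + M
          · have hCx : sC x = π x := by simp only [hsCdef]; exact if_pos ⟨h1, h2⟩
            have h3 := mul_le_mul_of_nonneg_left (hhigh x h1 h2) (hπnonneg x)
            have h4 : π x * (g x - γ + w x) = π x * g x - γ * π x + π x * w x := by
              ring
            simp only [hA, hBx, hCx, hsDdef, hχx]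
            linarith
          · have hCx : sC x = 0 := by
              simp only [hsCdef]; exact if_neg (fun hc => h2 hc.2)
            have h3 := mul_le_mul_of_nonneg_left (hfar x (not_le.mp h2)) (hπnonneg x)
            have h5 : 0 ≤ π x * w x := mul_nonneg (hπnonneg x) (hw0 x)
            simp only [hA, hBx, hCx, hsDdef, hχx]
            linarith
        · have hA : sA x = π x * max (ξ - (a - Φ x)) 0 := by
            simp only [hsAdef]; exact if_pos (not_lt.mp h1)
          have hBx : sB x = 0 := by simp only [hsBdef]; exact if_neg h1
          have hCx : sC x = 0 := by simp only [hsCdef]; exact if_neg (fun hc => h1 hc.1)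
          have hχx : χ x = 0 := by simp only [hχdef]; exact if_neg h1
          have h3 := mul_le_mul_of_nonneg_left (hlow x (not_lt.mp h1)) (hπnonneg x)
          simp only [hA, hBx, hCx, hsDdef, hχx]
          simpa using h3
      have hsum : Summable fun x => sA x + sB x - γ * sC x + sD x :=
        ((hsAs.add hsBs).sub (hsCs.mul_left γ)).add hsDs
      calc ∑' x, π x * F x ≤ ∑' x, (sA x + sB x - γ * sC x + sD x) :=
            Summable.tsum_le_tsum hpt hπF hsum
        _ = ∑' x, sA x + ∑' x, sB x - γ * ∑' x, sC x + ∑' x, sD x := by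
            rw [Summable.tsum_add ((hsAs.add hsBs).sub (hsCs.mul_left γ)) hsDs,
              Summable.tsum_sub (hsAs.add hsBs) (hsCs.mul_left γ),
              Summable.tsum_add hsAs hsBs, tsum_mul_left]
    -- ∑ sB ≤ ∑ π g
    have hS2le : ∑' x, sB x ≤ ∑' x, π x * g x := by
      refine Summable.tsum_le_tsum (fun x => ?_) hsBs hπg
      simp only [hsBdef]
      split
      · exact le_rfl
      · exact mul_nonneg (hπnonneg x) (hg0 x)
    have hmain : γ * ∑' x, sC x ≤ ∑' x, sA x + ∑' x, sD x := by linarith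
    -- bounding the weighted down-flux ∑ sD
    set e : S → ℝ := fun y => if a - ξ < Φ y ∧ Φ y ≤ a then π y * dd y else 0 with hedef
    have he0 : ∀ y, 0 ≤ e y := by
      intro y; simp only [hedef]
      split
      · exact mul_nonneg (hπnonneg y) (hd0 y)
      · exact le_rfl
    have hes : Summable e := by
      refine Summable.of_nonneg_of_le he0 (fun y => ?_) (hπs.mul_right ξ)
      simp only [hedef]
      split
      · exact mul_le_mul_of_nonneg_left (hdξ y) (hπnonneg y)
      · exact mul_nonneg (hπnonneg y) hξ.le
    have hWsum : ∑' x, sD x ≤ ∑' y, e y := by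
      set c : S → S → ℝ := fun x y => χ x * (P x y * dd y) with hcdef
      have hc0 : ∀ x y, 0 ≤ c x y :=
        fun x y => mul_nonneg (hχ0 x) (mul_nonneg (hPnonneg x y) (hd0 y))
      have hcrow : ∀ x, Summable (c x) := fun x => (hsPd x).mul_left (χ x)
      have hccol : Summable fun x => ∑' y, c x y :=
        hsDs.congr fun x => (tsum_mul_left (a := χ x)).symm
      have hunc : Summable (Function.uncurry c) := by
        refine (summable_prod_of_nonneg ?_).2 ⟨fun x => hcrow x, hccol⟩
        intro p
        exact hc0 p.1 p.2
      have hptc : ∀ y x, c x y ≤ (π x * P x y) * dd y := by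
        intro y x
        simp only [hcdef]
        rw [← mul_assoc]
        exact mul_le_mul_of_nonneg_right
          (mul_le_mul_of_nonneg_right (hχπ x) (hPnonneg x y)) (hd0 y)
      have hscol : ∀ y, Summable fun x => c x y := by
        intro y
        exact Summable.of_nonneg_of_le (fun x => hc0 x y) (hptc y)
          ((hπPs y).mul_right (dd y))
      have hcolsum : ∀ y, (∑' x, c x y) ≤ π y * dd y := by
        intro y
        calc ∑' x, c x y ≤ ∑' x, (π x * P x y) * dd y :=
              Summable.tsum_le_tsum (hptc y) (hscol y) ((hπPs y).mul_right (dd y))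
          _ = π y * dd y := by rw [tsum_mul_right, hstationary y]
      have hcolS : Summable fun y => ∑' x, c x y := by
        refine Summable.of_nonneg_of_le (fun y => tsum_nonneg fun x => hc0 x y)
          (fun y => (hcolsum y).trans ?_) (hπs.mul_right ξ)
        exact mul_le_mul_of_nonneg_left (hdξ y) (hπnonneg y)
      have h1 : ∑' x, sD x = ∑' y, ∑' x, c x y := by
        calc ∑' x, sD x = ∑' x, ∑' y, c x y :=
              tsum_congr fun x => (tsum_mul_left (a := χ x)).symm
          _ = ∑' y, ∑' x, c x y := (Summable.tsum_comm hunc).symm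
      rw [h1]
      refine Summable.tsum_le_tsum (fun y => ?_) hcolS hes
      by_cases hy1 : a < Φ y
      · have hdy : dd y = 0 := by
          simp only [hddef]
          rw [max_eq_right (by linarith), min_eq_left hξ.le]
        have : ∀ x, c x y = 0 := by
          intro x; simp only [hcdef]; simp [hdy]
        rw [tsum_congr this, tsum_zero]
        exact he0 y
      · by_cases hy2 : a - ξ < Φ y
        · have hey : e y = π y * dd y := by
            simp only [hedef]; exact if_pos ⟨hy2, not_lt.mp hy1⟩
          rw [hey]
          exact hcolsum y
        · have hcy : ∀ x, c x y = 0 := by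
            intro x
            simp only [hcdef]
            by_cases hx : a < Φ x
            · have hPxy : P x y = 0 := by
                by_contra hc
                have hpos := lt_of_le_of_ne (hPnonneg x y) (Ne.symm hc)
                have hb := abs_le.1 (hbdd x y hpos)
                have : Φ x ≤ Φ y + ξ := by linarith [hb.1]
                have : Φ y ≤ a - ξ := not_lt.mp hy2
                linarith
              simp [hPxy]
            · have : χ x = 0 := by simp only [hχdef]; exact if_neg hx
              simp [this]
          rw [tsum_congr hcy, tsum_zero]
          exact he0 y
    -- combining: γ · mid-mass ≤ ξ · band-mass
    have hband : ∑' x, sA x + ∑' y, e y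
        ≤ ξ * ∑' x, (if a - ξ < Φ x ∧ Φ x ≤ a then π x else 0) := by
      have hbs : Summable fun x => (if a - ξ < Φ x ∧ Φ x ≤ a then π x else 0) := by
        refine Summable.of_nonneg_of_le (fun x => ?_) (fun x => ?_) hπs
        · split <;> simp [hπnonneg x]
        · split <;> simp [hπnonneg x]
      rw [← Summable.tsum_add hsAs hes, ← tsum_mul_left]
      refine Summable.tsum_le_tsum (fun x => ?_) (hsAs.add hes) (hbs.mul_left ξ)
      by_cases h1 : Φ x ≤ a
      · by_cases h2 : a - ξ < Φ x
        · have hAx : sA x = π x * (ξ - (a - Φ x)) := by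
            simp only [hsAdef]
            rw [if_pos h1, max_eq_left (by linarith)]
          have hex : e x = π x * (a - Φ x) := by
            simp only [hedef, hddef]
            rw [if_pos ⟨h2, h1⟩, max_eq_left (by linarith), min_eq_left (by linarith)]
          rw [hAx, hex, if_pos ⟨h2, h1⟩]
          ring_nf
          nlinarith [hπnonneg x]
        · have hAx : sA x = π x * max (ξ - (a - Φ x)) 0 := by
            simp only [hsAdef]; exact if_pos h1
          have hmax : max (ξ - (a - Φ x)) 0 = 0 :=
            max_eq_right (by linarith [not_lt.mp h2])
          have hex : e x = 0 := by
            simp only [hedef]; exact if_neg (fun hc => h2 hc.1)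
          rw [hAx, hmax, hex, if_neg (fun hc => h2 hc.1)]
          simp
      · have hAx : sA x = 0 := by simp only [hsAdef]; exact if_neg h1
        have hex : e x = 0 := by
          simp only [hedef]; exact if_neg (fun hc => h1 hc.2)
        rw [hAx, hex, if_neg (fun hc => h1 hc.2)]
        simp
    -- translate the indicator sums into T-differences
    have hmid : (∑' x, sC x) = T a - T (a + M) := by
      simp only [hsCdef]
      exact hTdiff a (a + M) (by linarith)
    have hbandT : (∑' x, (if a - ξ < Φ x ∧ Φ x ≤ a then π x else 0))
        = T (a - ξ) - T a := hTdiff (a - ξ) a (by linarith)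
    have hfinal : γ * (T a - T (a + M)) ≤ ξ * (T (a - ξ) - T a) := by
      rw [← hmid, ← hbandT]
      calc γ * ∑' x, sC x ≤ ∑' x, sA x + ∑' x, sD x := hmain
        _ ≤ ∑' x, sA x + ∑' y, e y := by linarith [hWsum]
        _ ≤ ξ * ∑' x, (if a - ξ < Φ x ∧ Φ x ≤ a then π x else 0) := hband
    exact hfinal

  -- removing the truncation
  have key : ∀ a : ℝ, B ≤ a → (ξ + γ) * T a ≤ ξ * T (a - ξ) := by
    intro a ha
    have hlim : ∀ ε : ℝ, 0 < ε → ∃ M : ℝ, 0 < M ∧ T (a + M) < ε := by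
      intro ε hε
      have h1 : HasSum π 1 := hπsum ▸ hπs.hasSum
      have h2 : ∀ᶠ s in Filter.atTop, 1 - ε < ∑ x ∈ s, π x :=
        h1.eventually (eventually_gt_nhds (by linarith))
      obtain ⟨s₀, hs₀⟩ := h2.exists
      set M : ℝ := 1 + ∑ x ∈ s₀, |Φ x| with hMdef
      have hMpos : 0 < M := by positivity
      refine ⟨M, hMpos, ?_⟩
      have hMx : ∀ x ∈ s₀, Φ x ≤ a + M := by
        intro x hx
        have h3 : |Φ x| ≤ ∑ y ∈ s₀, |Φ y| :=
          Finset.single_le_sum (fun y _ => abs_nonneg (Φ y)) hx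
        have h4 := le_abs_self (Φ x)
        have h5 : 0 < a := lt_of_lt_of_le hB ha
        simp only [hMdef]
        linarith
      have hsfin : Summable fun x => if x ∈ s₀ then π x else 0 :=
        summable_of_ne_finset_zero (s := s₀) fun x hx => if_neg hx
      have hfin : (∑' x, if x ∈ s₀ then π x else 0) = ∑ x ∈ s₀, π x :=
        (tsum_eq_sum fun x hx => if_neg hx).trans
          (Finset.sum_congr rfl fun x hx => if_pos hx)
      have hpt : ∀ x, (if a + M < Φ x then π x else 0)
          ≤ π x - (if x ∈ s₀ then π x else 0) := by
        intro x
        by_cases hx : x ∈ s₀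
        · rw [if_pos hx, if_neg (not_lt.mpr (hMx x hx))]
          simp
        · rw [if_neg hx, sub_zero]
          split <;> simp [hπnonneg x]
      have h6 : T (a + M) ≤ 1 - ∑ x ∈ s₀, π x := by
        calc T (a + M) ≤ ∑' x, (π x - if x ∈ s₀ then π x else 0) :=
              Summable.tsum_le_tsum hpt (hTs _) (hπs.sub hsfin)
          _ = 1 - ∑ x ∈ s₀, π x := by rw [Summable.tsum_sub hπs hsfin, hπsum, hfin]
      linarith
    have h7 : γ * T a ≤ ξ * (T (a - ξ) - T a) := by
      refine le_of_forall_pos_le_add fun ε hε => ?_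
      obtain ⟨M, hMpos, hTM⟩ := hlim (ε / γ) (by positivity)
      have h8 := keyM a ha M hMpos
      have h9 : γ * T (a + M) ≤ γ * (ε / γ) := by
        exact mul_le_mul_of_nonneg_left hTM.le hγ.le
      rw [mul_div_cancel₀ _ (ne_of_gt hγ)] at h9
      linarith
    linarith
  -- the geometric recursion
  set κ : ℝ := ξ / (ξ + γ) with hκdef
  have hκ0 : 0 ≤ κ := div_nonneg hξ.le (by linarith)
  have hκ1 : κ ≤ 1 := by
    rw [hκdef, div_le_one (by linarith)]
    linarith
  have hrec : ∀ a : ℝ, B ≤ a → T a ≤ κ * T (a - ξ) := by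
    intro a ha
    have h1 := key a ha
    rw [hκdef, div_mul_eq_mul_div, le_div_iff₀ (by linarith : (0:ℝ) < ξ + γ)]
    linarith
  have hiter : ∀ j : ℕ, T (B + j * ξ) ≤ κ ^ (j + 1) := by
    intro j
    induction j with
    | zero =>
      have h1 := hrec B le_rfl
      have h2 : κ * T (B - ξ) ≤ κ * 1 := mul_le_mul_of_nonneg_left (hT1 _) hκ0
      simpa using h1.trans (by simpa using h2)
    | succ j ih =>
      have ha : B ≤ B + (↑(j + 1)) * ξ := by
        have : (0:ℝ) ≤ (↑(j+1)) * ξ := by positivity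
        linarith
      have h1 := hrec _ ha
      have harg : B + (↑(j + 1) : ℝ) * ξ - ξ = B + j * ξ := by push_cast; ring
      rw [harg] at h1
      calc T (B + (↑(j + 1) : ℝ) * ξ) ≤ κ * T (B + j * ξ) := h1
        _ ≤ κ * κ ^ (j + 1) := mul_le_mul_of_nonneg_left ih hκ0
        _ = κ ^ (j + 1 + 1) := by ring
  -- conclusion
  have hfin := hiter (2 * ℓ)
  have harg2 : B + (↑(2 * ℓ) : ℝ) * ξ = B + 2 * ξ * ℓ := by push_cast; ring
  rw [harg2] at hfin
  have hsub : (∑' x : {x : S // B + 2 * ξ * ℓ < Φ x}, π x) = T (B + 2 * ξ * ℓ) := by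
    rw [hTdef]
    refine (tsum_subtype {x : S | B + 2 * ξ * (ℓ:ℝ) < Φ x} π).trans ?_
    exact tsum_congr fun x => by simp [Set.indicator_apply, Set.mem_setOf_eq]
  rw [hsub]
  refine hfin.trans ?_
  exact pow_le_pow_of_le_one hκ0 hκ1 (by omega)
end

section
/- Let w_i > 0 for i in a finite index set I and α ∈ (0,1), and let L be as above (L(n) = [(α+1) Σ_i w_i H_α(n_i)]^{1/(α+1)}). For any n ∈ ℝ_+^I and m ∈ {0, ±e_i : i ∈ I} with n + m ∈ ℝ_+^I, |L(n+m) − L(n)| ≤ max_i w_i^{1/(α+1)} + 2 (2 Σ_i w_i)^{1/(α+1)}. -/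
open Finset

/-- The smoothed power function `h_α` for `α ∈ (0,1)`. -/
noncomputable def hfun (α : ℝ) (r : ℝ) : ℝ :=
  if r < 1 then (α - 1) * r ^ 3 + (1 - α) * r ^ 2 + r else r ^ α

/-- The antiderivative `H_α(r) = ∫_0^r h_α(s) ds`. -/
noncomputable def Hfun (α : ℝ) (r : ℝ) : ℝ := ∫ s in (0 : ℝ)..r, hfun α s

lemma hfun_cont {α : ℝ} (hα0 : 0 < α) : Continuous (hfun α) := by
  have h1 : Continuous fun r : ℝ => (α - 1) * r ^ 3 + (1 - α) * r ^ 2 + r := by continuity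
  have h2 : Continuous fun r : ℝ => r ^ α := Real.continuous_rpow_const hα0.le
  have heq : hfun α = fun r =>
      if (1 : ℝ) ≤ r then r ^ α else (α - 1) * r ^ 3 + (1 - α) * r ^ 2 + r := by
    funext r; unfold hfun
    rcases lt_or_ge r 1 with h | h
    · rw [if_pos h, if_neg (not_le.2 h)]
    · rw [if_neg (not_lt.2 h), if_pos h]
  rw [heq]
  refine Continuous.if_le h2 h1 continuous_const continuous_id fun r hr => ?_
  rw [← hr]
  norm_num [Real.one_rpow]

lemma hfun_nonneg {α : ℝ} (hα1 : α < 1) {s : ℝ} (hs : 0 ≤ s) : 0 ≤ hfun α s := by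
  unfold hfun
  split_ifs with h
  · nlinarith [mul_nonneg (mul_nonneg (sub_nonneg.2 hα1.le) (sq_nonneg s))
      (sub_nonneg.2 h.le)]
  · exact Real.rpow_nonneg hs α

lemma hfun_le {α : ℝ} (hα0 : 0 < α) (hα1 : α < 1) {s : ℝ} (hs : 0 ≤ s) :
    hfun α s ≤ s ^ α := by
  unfold hfun
  split_ifs with h
  · rcases eq_or_lt_of_le hs with rfl | hs'
    · simp [Real.zero_rpow hα0.ne']
    · -- key: s ^ (α - 1) ≥ 1 + (1 - α) * (1 - s)
      have hkey : 1 + (1 - α) * (1 - s) ≤ s ^ (α - 1) := by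
        rw [Real.rpow_def_of_pos hs']
        have hlog : Real.log s ≤ s - 1 := Real.log_le_sub_one_of_pos hs'
        have hexp : Real.log s * (α - 1) + 1 ≤ Real.exp (Real.log s * (α - 1)) :=
          Real.add_one_le_exp _
        nlinarith [hlog, hexp]
      have hsum : s ^ α = s * s ^ (α - 1) := by
        nth_rewrite 1 [show α = 1 + (α - 1) by ring]
        rw [Real.rpow_add hs', Real.rpow_one]
      rw [hsum]
      nlinarith [mul_le_mul_of_nonneg_left hkey hs'.le, hs'.le, h.le,
        mul_nonneg (mul_nonneg (sub_nonneg.2 hα1.le) hs'.le) (sub_nonneg.2 h.le)]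
  · exact le_refl _

lemma rpow_intervalIntegrable {α : ℝ} (hα0 : 0 < α) (a b : ℝ) :
    IntervalIntegrable (fun s : ℝ => s ^ α) MeasureTheory.volume a b :=
  (Real.continuous_rpow_const hα0.le).intervalIntegrable a b

lemma integral_rpow_eq {α : ℝ} (hα0 : 0 < α) (r : ℝ) :
    ∫ s in (0 : ℝ)..r, s ^ α = r ^ (α + 1) / (α + 1) := by
  rw [integral_rpow (Or.inl (by linarith))]
  rw [Real.zero_rpow (by positivity : α + 1 ≠ 0)]
  ring

lemma Hfun_nonneg {α : ℝ} (hα1 : α < 1) {r : ℝ} (hr : 0 ≤ r) : 0 ≤ Hfun α r :=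
  intervalIntegral.integral_nonneg hr fun s hs => hfun_nonneg hα1 hs.1

lemma Hfun_le {α : ℝ} (hα0 : 0 < α) (hα1 : α < 1) {r : ℝ} (hr : 0 ≤ r) :
    Hfun α r ≤ r ^ (α + 1) / (α + 1) := by
  rw [← integral_rpow_eq hα0 r]
  exact intervalIntegral.integral_mono_on hr ((hfun_cont hα0).intervalIntegrable _ _)
    (rpow_intervalIntegrable hα0 _ _) fun s hs => hfun_le hα0 hα1 hs.1

lemma Hfun_ge {α : ℝ} (hα0 : 0 < α) (hα1 : α < 1) {r : ℝ} (hr : 0 ≤ r) :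
    r ^ (α + 1) / (α + 1) - 1 / (α + 1) ≤ Hfun α r := by
  have hint_h : ∀ a b : ℝ, IntervalIntegrable (hfun α) MeasureTheory.volume a b :=
    fun a b => (hfun_cont hα0).intervalIntegrable a b
  have hint_r : ∀ a b : ℝ, IntervalIntegrable (fun s : ℝ => s ^ α) MeasureTheory.volume a b :=
    rpow_intervalIntegrable hα0
  have hint_g : ∀ a b : ℝ, IntervalIntegrable (fun s : ℝ => s ^ α - hfun α s)
      MeasureTheory.volume a b := fun a b => (hint_r a b).sub (hint_h a b)
  have hdiff : r ^ (α + 1) / (α + 1) - Hfun α r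
      = ∫ s in (0 : ℝ)..r, (s ^ α - hfun α s) := by
    rw [intervalIntegral.integral_sub (hint_r 0 r) (hint_h 0 r), ← integral_rpow_eq hα0 r]
    rfl
  have hgoal : (∫ s in (0 : ℝ)..r, (s ^ α - hfun α s)) ≤ 1 / (α + 1) := by
    rcases le_or_gt r 1 with hr1 | hr1
    · calc (∫ s in (0 : ℝ)..r, (s ^ α - hfun α s)) ≤ ∫ s in (0 : ℝ)..r, s ^ α := by
            refine intervalIntegral.integral_mono_on hr (hint_g 0 r) (hint_r 0 r)
              fun s hs => ?_
            have := hfun_nonneg hα1 hs.1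
            linarith
        _ = r ^ (α + 1) / (α + 1) := integral_rpow_eq hα0 r
        _ ≤ 1 / (α + 1) := by
            gcongr
            exact Real.rpow_le_one hr hr1 (by linarith)
    · have hsplit : (∫ s in (0 : ℝ)..r, (s ^ α - hfun α s))
          = (∫ s in (0 : ℝ)..1, (s ^ α - hfun α s))
            + ∫ s in (1 : ℝ)..r, (s ^ α - hfun α s) :=
        (intervalIntegral.integral_add_adjacent_intervals (hint_g 0 1) (hint_g 1 r)).symm
      have hzero : (∫ s in (1 : ℝ)..r, (s ^ α - hfun α s)) = 0 := by
        rw [intervalIntegral.integral_congr (g := fun _ => (0 : ℝ)) ?_]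
        · simp
        · intro s hs
          rw [Set.uIcc_of_le hr1.le] at hs
          show s ^ α - hfun α s = 0
          unfold hfun
          rw [if_neg (not_lt.2 hs.1)]
          simp
      have hone : (∫ s in (0 : ℝ)..1, (s ^ α - hfun α s)) ≤ 1 / (α + 1) := by
        calc (∫ s in (0 : ℝ)..1, (s ^ α - hfun α s)) ≤ ∫ s in (0 : ℝ)..1, s ^ α := by
              refine intervalIntegral.integral_mono_on zero_le_one (hint_g 0 1) (hint_r 0 1)
                fun s hs => ?_
              have := hfun_nonneg hα1 hs.1
              linarith
          _ = 1 ^ (α + 1) / (α + 1) := integral_rpow_eq hα0 1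
          _ = 1 / (α + 1) := by rw [Real.one_rpow]
      rw [hsplit, hzero, add_zero]
      exact hone
  linarith [hdiff ▸ hgoal]

lemma real_rpow_add_le {x y q : ℝ} (hx : 0 ≤ x) (hy : 0 ≤ y) (hq0 : 0 ≤ q) (hq1 : q ≤ 1) :
    (x + y) ^ q ≤ x ^ q + y ^ q := by
  have h := NNReal.rpow_add_le_add_rpow (Real.toNNReal x) (Real.toNNReal y) hq0 hq1
  have hcoe := NNReal.coe_le_coe.2 h
  push_cast at hcoe
  rwa [Real.coe_toNNReal x hx, Real.coe_toNNReal y hy] at hcoe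

/-- Weighted Minkowski-type bound for the weighted `p`-norm. -/
lemma weighted_minkowski {I : Type*} [Fintype I] (w : I → ℝ) (hw : ∀ i, 0 < w i)
    {p : ℝ} (hp : 1 ≤ p) (a b : I → ℝ) (ha : ∀ i, 0 ≤ a i) :
    (∑ i, w i * a i ^ p) ^ (1 / p) ≤
      (∑ i, w i * |b i| ^ p) ^ (1 / p) + (∑ i, w i * |a i - b i| ^ p) ^ (1 / p) := by
  have hp0 : (0 : ℝ) < p := lt_of_lt_of_le zero_lt_one hp
  have hwp : ∀ i, (w i ^ (1 / p)) ^ p = w i := by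
    intro i
    rw [← Real.rpow_mul (hw i).le, one_div, inv_mul_cancel₀ hp0.ne', Real.rpow_one]
  calc (∑ i, w i * a i ^ p) ^ (1 / p)
      = (∑ i, |(fun i => w i ^ (1 / p) * b i) i
          + (fun i => w i ^ (1 / p) * (a i - b i)) i| ^ p) ^ (1 / p) := by
        congr 1
        refine Finset.sum_congr rfl fun i _ => ?_
        have he : (fun i => w i ^ (1 / p) * b i) i
            + (fun i => w i ^ (1 / p) * (a i - b i)) i = w i ^ (1 / p) * a i := by ring
        rw [he, abs_mul, abs_of_nonneg (Real.rpow_nonneg (hw i).le _), abs_of_nonneg (ha i),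
          Real.mul_rpow (Real.rpow_nonneg (hw i).le _) (ha i), hwp i]
    _ ≤ (∑ i, |(fun i => w i ^ (1 / p) * b i) i| ^ p) ^ (1 / p)
          + (∑ i, |(fun i => w i ^ (1 / p) * (a i - b i)) i| ^ p) ^ (1 / p) :=
        Real.Lp_add_le Finset.univ _ _ hp
    _ = (∑ i, w i * |b i| ^ p) ^ (1 / p) + (∑ i, w i * |a i - b i| ^ p) ^ (1 / p) := by
        congr 1 <;>
          · congr 1
            refine Finset.sum_congr rfl fun i _ => ?_
            rw [abs_mul, abs_of_nonneg (Real.rpow_nonneg (hw i).le _),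
              Real.mul_rpow (Real.rpow_nonneg (hw i).le _) (abs_nonneg _), hwp i]

/-- Bounded increments for the smoothed Lyapunov function
`L(n) = [(α+1) ∑_i w_i H_α(n_i)]^{1/(α+1)}` under single-coordinate unit changes:
`|L(n+m) − L(n)| ≤ max_i w_i^{1/(α+1)} + 2 (2 ∑_i w_i)^{1/(α+1)}`. -/
theorem smoothed_norm_bounded_increments
    {I : Type*} [Fintype I] [Nonempty I] [DecidableEq I]
    (w : I → ℝ) (hw : ∀ i, 0 < w i)
    (α : ℝ) (hα0 : 0 < α) (hα1 : α < 1)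
    (n m : I → ℝ) (hn : ∀ i, 0 ≤ n i) (hnm : ∀ i, 0 ≤ n i + m i)
    (hm : m = 0 ∨ ∃ i, m = Pi.single i (1 : ℝ) ∨ m = -Pi.single i (1 : ℝ)) :
    |((α + 1) * ∑ i, w i * Hfun α (n i + m i)) ^ (1 / (α + 1))
        - ((α + 1) * ∑ i, w i * Hfun α (n i)) ^ (1 / (α + 1))|
      ≤ Finset.univ.sup' Finset.univ_nonempty (fun i => w i ^ (1 / (α + 1)))
          + 2 * (2 * ∑ i, w i) ^ (1 / (α + 1)) := by
  have hp0 : (0 : ℝ) < α + 1 := by linarith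
  have hp1 : (1 : ℝ) ≤ α + 1 := by linarith
  have hq0 : (0 : ℝ) ≤ 1 / (α + 1) := by positivity
  have hq1 : 1 / (α + 1) ≤ 1 := by rw [div_le_one hp0]; linarith
  have hWpos : (0 : ℝ) < ∑ i, w i := Finset.sum_pos (fun i _ => hw i) Finset.univ_nonempty
  -- bounds relating `S v` to `T v`
  have hHle : ∀ r : ℝ, 0 ≤ r → (α + 1) * Hfun α r ≤ r ^ (α + 1) := by
    intro r hr
    have h := Hfun_le hα0 hα1 hr
    rw [le_div_iff₀ hp0] at h
    linarith
  have hHge : ∀ r : ℝ, 0 ≤ r → r ^ (α + 1) - 1 ≤ (α + 1) * Hfun α r := by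
    intro r hr
    have h := Hfun_ge hα0 hα1 hr
    have h2 := mul_le_mul_of_nonneg_right h hp0.le
    have h3 : (r ^ (α + 1) / (α + 1) - 1 / (α + 1)) * (α + 1) = r ^ (α + 1) - 1 := by
      field_simp
    rw [h3] at h2
    linarith
  have hS_le : ∀ v : I → ℝ, (∀ i, 0 ≤ v i) →
      (α + 1) * ∑ i, w i * Hfun α (v i) ≤ ∑ i, w i * v i ^ (α + 1) := by
    intro v hv
    rw [Finset.mul_sum]
    refine Finset.sum_le_sum fun i _ => ?_
    have h := hHle (v i) (hv i)
    calc (α + 1) * (w i * Hfun α (v i)) = w i * ((α + 1) * Hfun α (v i)) := by ring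
      _ ≤ w i * (v i ^ (α + 1)) := mul_le_mul_of_nonneg_left h (hw i).le
  have hS_ge : ∀ v : I → ℝ, (∀ i, 0 ≤ v i) →
      (∑ i, w i * v i ^ (α + 1)) - (∑ i, w i) ≤ (α + 1) * ∑ i, w i * Hfun α (v i) := by
    intro v hv
    rw [Finset.mul_sum, ← Finset.sum_sub_distrib]
    refine Finset.sum_le_sum fun i _ => ?_
    have h := hHge (v i) (hv i)
    calc w i * v i ^ (α + 1) - w i = w i * (v i ^ (α + 1) - 1) := by ring
      _ ≤ w i * ((α + 1) * Hfun α (v i)) := mul_le_mul_of_nonneg_left h (hw i).le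
      _ = (α + 1) * (w i * Hfun α (v i)) := by ring
  have hS_nonneg : ∀ v : I → ℝ, (∀ i, 0 ≤ v i) →
      0 ≤ (α + 1) * ∑ i, w i * Hfun α (v i) := by
    intro v hv
    exact mul_nonneg hp0.le (Finset.sum_nonneg fun i _ =>
      mul_nonneg (hw i).le (Hfun_nonneg hα1 (hv i)))
  have hT_nonneg : ∀ v : I → ℝ, (∀ i, 0 ≤ v i) → 0 ≤ ∑ i, w i * v i ^ (α + 1) :=
    fun v hv => Finset.sum_nonneg fun i _ =>
      mul_nonneg (hw i).le (Real.rpow_nonneg (hv i) _)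
  -- L vs N comparisons
  have hLN : ∀ v : I → ℝ, (∀ i, 0 ≤ v i) →
      ((α + 1) * ∑ i, w i * Hfun α (v i)) ^ (1 / (α + 1))
        ≤ (∑ i, w i * v i ^ (α + 1)) ^ (1 / (α + 1)) :=
    fun v hv => Real.rpow_le_rpow (hS_nonneg v hv) (hS_le v hv) hq0
  have hNL : ∀ v : I → ℝ, (∀ i, 0 ≤ v i) →
      (∑ i, w i * v i ^ (α + 1)) ^ (1 / (α + 1))
        ≤ ((α + 1) * ∑ i, w i * Hfun α (v i)) ^ (1 / (α + 1))
          + (∑ i, w i) ^ (1 / (α + 1)) := by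
    intro v hv
    calc (∑ i, w i * v i ^ (α + 1)) ^ (1 / (α + 1))
        ≤ ((α + 1) * (∑ i, w i * Hfun α (v i)) + ∑ i, w i) ^ (1 / (α + 1)) := by
          apply Real.rpow_le_rpow (hT_nonneg v hv) ?_ hq0
          have := hS_ge v hv
          linarith
      _ ≤ ((α + 1) * ∑ i, w i * Hfun α (v i)) ^ (1 / (α + 1))
            + (∑ i, w i) ^ (1 / (α + 1)) :=
          real_rpow_add_le (hS_nonneg v hv) hWpos.le hq0 hq1
  rcases hm with rfl | ⟨j, hj⟩
  · simp only [Pi.zero_apply, add_zero, sub_self, abs_zero]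
    have h1 : 0 < w (Classical.arbitrary I) ^ (1 / (α + 1)) :=
      Real.rpow_pos_of_pos (hw _) _
    have h2 : (0 : ℝ) ≤ 2 * (2 * ∑ i, w i) ^ (1 / (α + 1)) := by positivity
    have h3 := Finset.le_sup' (f := fun i => w i ^ (1 / (α + 1)))
      (Finset.mem_univ (Classical.arbitrary I))
    linarith
  · have hmabs : ∀ i, |m i| = if i = j then 1 else 0 := by
      intro i
      rcases hj with rfl | rfl
      · rw [Pi.single_apply]; split_ifs <;> simp
      · rw [Pi.neg_apply, abs_neg, Pi.single_apply]; split_ifs <;> simp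
    have hM : (∑ i, w i * |m i| ^ (α + 1)) = w j := by
      have hterm : ∀ i, w i * |m i| ^ (α + 1) = if i = j then w i else 0 := by
        intro i
        rw [hmabs i]
        split_ifs with h
        · rw [Real.one_rpow, mul_one]
        · rw [Real.zero_rpow hp0.ne', mul_zero]
      simp_rw [hterm]
      simp
    have hmink : ∀ a b : I → ℝ, (∀ i, 0 ≤ a i) → (∀ i, 0 ≤ b i) →
        (∀ i, |a i - b i| = |m i|) →
        (∑ i, w i * a i ^ (α + 1)) ^ (1 / (α + 1))
          ≤ (∑ i, w i * b i ^ (α + 1)) ^ (1 / (α + 1)) + w j ^ (1 / (α + 1)) := by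
      intro a b ha hb hab
      have h := weighted_minkowski w hw hp1 a b ha
      have e1 : (∑ i, w i * |b i| ^ (α + 1)) = ∑ i, w i * b i ^ (α + 1) :=
        Finset.sum_congr rfl fun i _ => by rw [abs_of_nonneg (hb i)]
      have e2 : (∑ i, w i * |a i - b i| ^ (α + 1)) = w j := by
        rw [Finset.sum_congr rfl fun i _ => by rw [hab i]]
        exact hM
      rw [e1, e2] at h
      exact h
    have hd1 : (∑ i, w i * (n i + m i) ^ (α + 1)) ^ (1 / (α + 1))
        ≤ (∑ i, w i * n i ^ (α + 1)) ^ (1 / (α + 1)) + w j ^ (1 / (α + 1)) :=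
      hmink _ n hnm hn fun i => by rw [show n i + m i - n i = m i by ring]
    have hd2 : (∑ i, w i * n i ^ (α + 1)) ^ (1 / (α + 1))
        ≤ (∑ i, w i * (n i + m i) ^ (α + 1)) ^ (1 / (α + 1)) + w j ^ (1 / (α + 1)) :=
      hmink n _ hn hnm fun i => by rw [show n i - (n i + m i) = -(m i) by ring, abs_neg]
    have hsup : w j ^ (1 / (α + 1))
        ≤ Finset.univ.sup' Finset.univ_nonempty (fun i => w i ^ (1 / (α + 1))) :=
      Finset.le_sup' (fun i => w i ^ (1 / (α + 1))) (Finset.mem_univ j)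
    have hW2 : (∑ i, w i) ^ (1 / (α + 1)) ≤ 2 * (2 * ∑ i, w i) ^ (1 / (α + 1)) := by
      have h1 : (∑ i, w i) ^ (1 / (α + 1)) ≤ (2 * ∑ i, w i) ^ (1 / (α + 1)) :=
        Real.rpow_le_rpow hWpos.le (by linarith) hq0
      have h2 : (0 : ℝ) ≤ (2 * ∑ i, w i) ^ (1 / (α + 1)) :=
        Real.rpow_nonneg (by linarith) _
      linarith
    have hA1 := hLN _ hnm
    have hA2 := hNL _ hnm
    have hB1 := hLN n hn
    have hB2 := hNL n hn
    rw [abs_sub_le_iff]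
    constructor
    · linarith
    · linarith
end
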